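/- arXiv:2402.15834 — 2 statements merged into one kernel-verified Lean document; each statement's English description precedes it below -/
import Mathlib

section
/- Let G be a finite simple graph and let H be an induced minor of G, i.e., a graph obtainable (up to isomorphism) from G by a finite sequence of vertex deletions and edge contractions. Then tree-μ(H) ≤ tree-μ(G). In particular, for every vertex v of G, tree-μ(G − v) ≤ tree-μ(G), and for every edge uv of G, the graph G/uv obtained by contracting uv (identifying u and v into a single vertex adjacent to all former neighbors of u or v, with no loops or multiple edges) satisfies tree-μ(G/uv) ≤ tree-μ(G). -/
open SimpleGraph

namespace Paper

/-- A tree decomposition of a graph `G`. -/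
structure TreeDecomp {V : Type} (G : SimpleGraph V) where
  ι : Type
  fin : Fintype ι
  tree : SimpleGraph ι
  isTree : tree.IsTree
  bag : ι → Set V
  mem_bag : ∀ v : V, ∃ t, v ∈ bag t
  edge_bag : ∀ ⦃u w : V⦄, G.Adj u w → ∃ t, u ∈ bag t ∧ w ∈ bag t
  coherent : ∀ v : V, (tree.induce {t | v ∈ bag t}).Connected

/-- `M` is an induced matching in `G`: a set of edges, pairwise disjoint,
with no edge of `G` joining endpoints of distinct edges of `M`. -/
def IsInducedMatching {V : Type} (G : SimpleGraph V) (M : Finset (V × V)) : Prop :=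
  (∀ p ∈ M, G.Adj p.1 p.2) ∧
    ∀ p ∈ M, ∀ q ∈ M, p ≠ q →
      (p.1 ≠ q.1 ∧ p.1 ≠ q.2 ∧ p.2 ≠ q.1 ∧ p.2 ≠ q.2) ∧
      (¬ G.Adj p.1 q.1 ∧ ¬ G.Adj p.1 q.2 ∧ ¬ G.Adj p.2 q.1 ∧ ¬ G.Adj p.2 q.2)

/-- Every edge of `M` has an endpoint in `X`. -/
def Touches {V : Type} (M : Finset (V × V)) (X : Set V) : Prop :=
  ∀ p ∈ M, p.1 ∈ X ∨ p.2 ∈ X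

/-- μ(𝒯): the maximum size of an induced matching of `G` all of whose edges
touch a common bag of the tree decomposition `D`. -/
noncomputable def mu {V : Type} (G : SimpleGraph V) (D : TreeDecomp G) : ℕ :=
  sSup {n | ∃ (t : D.ι) (M : Finset (V × V)),
    IsInducedMatching G M ∧ Touches M (D.bag t) ∧ M.card = n}

/-- Induced matching treewidth: minimum of μ(𝒯) over tree decompositions. -/
noncomputable def treeMu {V : Type} (G : SimpleGraph V) : ℕ :=
  sInf {n | ∃ D : TreeDecomp G, mu G D = n}

/-- `S` is an independent set of `G`. -/
def IsIndepSet {V : Type} (G : SimpleGraph V) (S : Finset V) : Prop :=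
  ∀ u ∈ S, ∀ v ∈ S, u ≠ v → ¬ G.Adj u v

/-- α(𝒯): the maximum size of an independent set of `G` contained in a bag. -/
noncomputable def alphaTD {V : Type} (G : SimpleGraph V) (D : TreeDecomp G) : ℕ :=
  sSup {n | ∃ (t : D.ι) (S : Finset V),
    IsIndepSet G S ∧ ↑S ⊆ D.bag t ∧ S.card = n}

/-- Tree-independence number: minimum of α(𝒯) over tree decompositions. -/
noncomputable def treeAlpha {V : Type} (G : SimpleGraph V) : ℕ :=
  sInf {n | ∃ D : TreeDecomp G, alphaTD G D = n}

/-- The `k`-th power of `G`: distinct vertices adjacent iff their distance in `G`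
is at most `k` (for `k = 0` this is the edgeless graph). -/
def power {V : Type} (G : SimpleGraph V) (k : ℕ) : SimpleGraph V :=
  SimpleGraph.fromRel (fun u v => G.Reachable u v ∧ G.dist u v ≤ k)

/-- The graph `G°[ℋ]` for a family `ℋ = {H j}` of subgraphs of `G`: vertices are
indices `j`, two distinct indices adjacent iff the subgraphs share a vertex or
there is an edge of `G` between them. -/
def blowup {V J : Type} (G : SimpleGraph V) (H : J → G.Subgraph) : SimpleGraph J :=
  SimpleGraph.fromRel (fun i j =>
    ((H i).verts ∩ (H j).verts).Nonempty ∨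
      ∃ u ∈ (H i).verts, ∃ v ∈ (H j).verts, G.Adj u v)


/-- `H` is an induced minor of `G`: there is a family of nonempty, pairwise
disjoint, connected branch sets in `G`, one for each vertex of `H`, such that
distinct vertices of `H` are adjacent iff there is an edge of `G` between the
corresponding branch sets. (This is the standard model characterization of
being obtainable from `G` by vertex deletions and edge contractions.) -/
def IsInducedMinor {V W : Type} (G : SimpleGraph V) (H : SimpleGraph W) : Prop :=
  ∃ φ : W → Set V,
    (∀ w, (φ w).Nonempty) ∧
    (∀ w, (G.induce (φ w)).Connected) ∧
    (∀ w₁ w₂, w₁ ≠ w₂ → Disjoint (φ w₁) (φ w₂)) ∧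
    (∀ w₁ w₂, w₁ ≠ w₂ →
      (H.Adj w₁ w₂ ↔ ∃ u ∈ φ w₁, ∃ v ∈ φ w₂, G.Adj u v))

/-- The graph obtained from `G` by contracting the edge `uv` (identifying `u`
and `v` into the vertex `u`, which becomes adjacent to all former neighbors of
`u` or `v`; no loops or multiple edges). -/
def contractEdge {V : Type} (G : SimpleGraph V) (u v : V) :
    SimpleGraph {w : V // w ≠ v} :=
  SimpleGraph.fromRel (fun a b =>
    G.Adj a.1 b.1 ∨ (a.1 = u ∧ G.Adj v b.1) ∨ (b.1 = u ∧ G.Adj a.1 v))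



lemma connected_of_sub {V : Type} (G : SimpleGraph V) [Nonempty V] [Subsingleton V] :
    G.Connected :=
  Connected.mk (fun a b => by rw [Subsingleton.elim a b])

lemma reach_induce_mono {V : Type} {G : SimpleGraph V} {S S' : Set V} (h : S ⊆ S')
    {a b : ↥S} (hr : (G.induce S).Reachable a b) :
    (G.induce S').Reachable ⟨a.1, h a.2⟩ ⟨b.1, h b.2⟩ :=
  hr.map (induceHom (Hom.id (G := G)) (fun x hx => h hx))

lemma induce_iUnion_connected {ι V : Type} (T : SimpleGraph ι) (G : SimpleGraph V)
    (S : Set V) (hS : (G.induce S).Connected)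
    (A : V → Set ι)
    (hA : ∀ v, (T.induce (A v)).Connected)
    (hedge : ∀ ⦃u v : V⦄, G.Adj u v → ∃ s, s ∈ A u ∧ s ∈ A v) :
    (T.induce (⋃ v ∈ S, A v)).Connected := by
  have hsub : ∀ u : ↥S, A u.1 ⊆ ⋃ v ∈ S, A v := fun u x hx =>
    Set.mem_biUnion u.2 hx
  have key : ∀ (u v : ↥S) (w : (G.induce S).Walk u v) (a : ↥(A u.1)) (b : ↥(A v.1)),
      (T.induce (⋃ v ∈ S, A v)).Reachable ⟨a.1, hsub u a.2⟩ ⟨b.1, hsub v b.2⟩ := by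
    intro u v w
    induction w with
    | nil =>
      intro a b
      exact reach_induce_mono (hsub _) ((hA _).preconnected a b)
    | @cons u x v h p ih =>
      intro a b
      have hG : G.Adj u.1 x.1 := h
      obtain ⟨c, hcu, hcx⟩ := hedge hG
      exact (reach_induce_mono (hsub u) ((hA u.1).preconnected a ⟨c, hcu⟩)).trans
        (ih ⟨c, hcx⟩ b)
  haveI : Nonempty ↥(⋃ v ∈ S, A v) := by
    obtain ⟨u⟩ := hS.nonempty
    obtain ⟨a⟩ := (hA u.1).nonempty
    exact ⟨⟨a.1, hsub u a.2⟩⟩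
  refine Connected.mk ?_
  · rintro ⟨a, ha⟩ ⟨b, hb⟩
    simp only [Set.mem_iUnion] at ha hb
    obtain ⟨u, hu, hau⟩ := ha
    obtain ⟨v, hv, hbv⟩ := hb
    obtain ⟨w⟩ := hS.preconnected ⟨u, hu⟩ ⟨v, hv⟩
    exact key ⟨u, hu⟩ ⟨v, hv⟩ w ⟨a, hau⟩ ⟨b, hbv⟩


lemma induce_pair_connected {V : Type} (G : SimpleGraph V) {u v : V} (h : G.Adj u v) :
    (G.induce {u, v}).Connected := by
  haveI : Nonempty ↥({u, v} : Set V) := ⟨⟨u, Or.inl rfl⟩⟩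
  refine Connected.mk ?_
  have key : ∀ x (hx : x ∈ ({u, v} : Set V)),
      (G.induce {u, v}).Reachable ⟨u, Or.inl rfl⟩ ⟨x, hx⟩ := by
    intro x hx
    rcases hx with rfl | rfl
    · exact Reachable.refl _
    · exact Adj.reachable (by exact h)
  rintro ⟨a, ha⟩ ⟨b, hb⟩
  exact (key a ha).symm.trans (key b hb)

/-- The trivial one-bag tree decomposition. -/
noncomputable def trivialDecomp {V : Type} (G : SimpleGraph V) : TreeDecomp G where
  ι := PUnit
  fin := inferInstance
  tree := ⊥
  isTree := ⟨Connected.mk preconnected_bot, isAcyclic_bot⟩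
  bag := fun _ => Set.univ
  mem_bag := fun v => ⟨PUnit.unit, Set.mem_univ v⟩
  edge_bag := fun u w _ => ⟨PUnit.unit, Set.mem_univ u, Set.mem_univ w⟩
  coherent := fun v => by
    haveI : Nonempty ↥{t : PUnit | v ∈ (Set.univ : Set V)} :=
      ⟨⟨PUnit.unit, Set.mem_univ v⟩⟩
    exact connected_of_sub _

lemma exists_adj_of_reachable_ne {α : Type} {Gr : SimpleGraph α} {u v : α}
    (hr : Gr.Reachable u v) (hne : u ≠ v) : ∃ y, Gr.Adj u y := by
  obtain ⟨wk⟩ := hr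
  cases wk with
  | nil => exact absurd rfl hne
  | cons h p => exact ⟨_, h⟩

lemma treeMu_le_of_isInducedMinor {V W : Type} [Fintype V] [DecidableEq V]
    (G : SimpleGraph V) (H : SimpleGraph W) (h : IsInducedMinor G H) :
    treeMu H ≤ treeMu G := by
  classical
  obtain ⟨φ, hne, hconn, hdisjφ, hadjφ⟩ := h
  have hdisj' : ∀ {w w' : W}, w ≠ w' → ∀ {x : V}, x ∈ φ w → x ∈ φ w' → False := by
    intro w w' hww x hx hx'
    exact Set.disjoint_left.mp (hdisjφ _ _ hww) hx hx'
  obtain ⟨D, hD⟩ : ∃ D : TreeDecomp G, mu G D = treeMu G :=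
    Nat.sInf_mem (⟨mu G (trivialDecomp G), trivialDecomp G, rfl⟩ :
      Set.Nonempty {n | ∃ D : TreeDecomp G, mu G D = n})
  let D' : TreeDecomp H :=
  { ι := D.ι
    fin := D.fin
    tree := D.tree
    isTree := D.isTree
    bag := fun t => {w | ∃ x ∈ φ w, x ∈ D.bag t}
    mem_bag := fun w => by
      obtain ⟨x, hx⟩ := hne w
      obtain ⟨t, ht⟩ := D.mem_bag x
      exact ⟨t, x, hx, ht⟩
    edge_bag := fun w₁ w₂ hw => by
      obtain ⟨x, hx, y, hy, hxy⟩ := (hadjφ _ _ hw.ne).mp hw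
      obtain ⟨t, ht1, ht2⟩ := D.edge_bag hxy
      exact ⟨t, ⟨x, hx, ht1⟩, ⟨y, hy, ht2⟩⟩
    coherent := fun w => by
      have hset : {t | w ∈ {w' | ∃ x ∈ φ w', x ∈ D.bag t}} =
          ⋃ x ∈ φ w, {t | x ∈ D.bag t} := by
        ext t
        simp only [Set.mem_setOf_eq, Set.mem_iUnion]
        tauto
      rw [hset]
      exact induce_iUnion_connected D.tree G (φ w) (hconn w) _
        (fun x => D.coherent x) (fun u v huv => D.edge_bag huv) }
  refine le_trans (Nat.sInf_le ⟨D', rfl⟩) ?_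
  rw [← hD]
  obtain ⟨t₀⟩ : Nonempty D.ι := D.isTree.isConnected.nonempty
  have hbdd : BddAbove {n | ∃ (t : D.ι) (M : Finset (V × V)),
      IsInducedMatching G M ∧ Touches M (D.bag t) ∧ M.card = n} := by
    refine ⟨Fintype.card (V × V), ?_⟩
    rintro n ⟨t, M, _, _, rfl⟩
    simpa using M.card_le_univ
  apply csSup_le
  · exact ⟨0, t₀, ∅, ⟨by simp, by simp⟩, by simp [Touches], rfl⟩
  rintro n ⟨t, M', hM', hT, rfl⟩
  rcases M'.eq_empty_or_nonempty with rfl | hMne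
  · simpa using Nat.zero_le _
  obtain ⟨p₀, hp₀⟩ := hMne
  obtain ⟨v₀, -⟩ := hne p₀.1
  haveI : Nonempty (V × V) := ⟨(v₀, v₀)⟩
  have helper : ∀ (w w' : W), H.Adj w w' → ∀ x, x ∈ φ w → x ∈ D.bag t →
      ∃ e : V × V, G.Adj e.1 e.2 ∧ e.1 ∈ D.bag t ∧ e.1 ∈ φ w ∧
        (e.2 ∈ φ w ∨ e.2 ∈ φ w') := by
    intro w w' hww x hxw hxt
    by_cases hnb : ∃ y ∈ φ w, G.Adj x y
    · obtain ⟨y, hy, hxy⟩ := hnb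
      exact ⟨(x, y), hxy, hxt, hxw, Or.inl hy⟩
    · have hsingle : ∀ z ∈ φ w, z = x := by
        intro z hz
        by_contra hzx
        obtain ⟨y, hy⟩ := exists_adj_of_reachable_ne
          ((hconn w).preconnected ⟨x, hxw⟩ ⟨z, hz⟩)
          (fun hh => hzx (congrArg Subtype.val hh).symm)
        exact hnb ⟨y.1, y.2, hy⟩
      obtain ⟨x', hx', y', hy', hxy⟩ := (hadjφ w w' hww.ne).mp hww
      rw [hsingle x' hx'] at hxy
      exact ⟨(x, y'), hxy, hxt, hxw, Or.inr hy'⟩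
  have hex : ∀ p ∈ M', ∃ e : V × V, G.Adj e.1 e.2 ∧ e.1 ∈ D.bag t ∧
      (e.1 ∈ φ p.1 ∨ e.1 ∈ φ p.2) ∧ (e.2 ∈ φ p.1 ∨ e.2 ∈ φ p.2) := by
    intro p hp
    have hadjp : H.Adj p.1 p.2 := hM'.1 p hp
    rcases hT p hp with hx | hx
    · obtain ⟨x, hxφ, hxt⟩ := hx
      obtain ⟨e, h1, h2, h3, h4⟩ := helper p.1 p.2 hadjp x hxφ hxt
      exact ⟨e, h1, h2, Or.inl h3, h4⟩
    · obtain ⟨x, hxφ, hxt⟩ := hx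
      obtain ⟨e, h1, h2, h3, h4⟩ := helper p.2 p.1 hadjp.symm x hxφ hxt
      exact ⟨e, h1, h2, Or.inr h3, h4.symm⟩
  choose! f hf using hex
  have hinj : Set.InjOn f ↑M' := by
    intro p hp q hq hpq
    by_contra hne'
    obtain ⟨⟨d1, d2, d3, d4⟩, -⟩ := hM'.2 p hp q hq hne'
    have h1 := (hf p hp).2.2.1
    have h2 := (hf q hq).2.2.1
    rw [hpq] at h1
    rcases h1 with h1 | h1 <;> rcases h2 with h2 | h2
    exacts [hdisj' d1 h1 h2, hdisj' d2 h1 h2, hdisj' d3 h1 h2, hdisj' d4 h1 h2]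
  refine le_csSup hbdd ⟨t, M'.image f, ⟨?_, ?_⟩, ?_, Finset.card_image_of_injOn hinj⟩
  · rintro e he
    obtain ⟨p, hp, rfl⟩ := Finset.mem_image.mp he
    exact (hf p hp).1
  · rintro e₁ he₁ e₂ he₂ hne12
    obtain ⟨p, hp, rfl⟩ := Finset.mem_image.mp he₁
    obtain ⟨q, hq, rfl⟩ := Finset.mem_image.mp he₂
    have hpq : p ≠ q := fun hh => hne12 (by rw [hh])
    obtain ⟨⟨d1, d2, d3, d4⟩, n1, n2, n3, n4⟩ := hM'.2 p hp q hq hpq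
    have cross : ∀ {x y : V}, (x ∈ φ p.1 ∨ x ∈ φ p.2) → (y ∈ φ q.1 ∨ y ∈ φ q.2) →
        x ≠ y ∧ ¬ G.Adj x y := by
      intro x y hx hy
      constructor
      · rintro rfl
        rcases hx with hx | hx <;> rcases hy with hy | hy
        exacts [hdisj' d1 hx hy, hdisj' d2 hx hy, hdisj' d3 hx hy, hdisj' d4 hx hy]
      · intro hGxy
        rcases hx with hx | hx <;> rcases hy with hy | hy
        exacts [n1 ((hadjφ _ _ d1).mpr ⟨x, hx, y, hy, hGxy⟩),
          n2 ((hadjφ _ _ d2).mpr ⟨x, hx, y, hy, hGxy⟩),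
          n3 ((hadjφ _ _ d3).mpr ⟨x, hx, y, hy, hGxy⟩),
          n4 ((hadjφ _ _ d4).mpr ⟨x, hx, y, hy, hGxy⟩)]
    obtain ⟨-, -, hp1, hp2⟩ := hf p hp
    obtain ⟨-, -, hq1, hq2⟩ := hf q hq
    exact ⟨⟨(cross hp1 hq1).1, (cross hp1 hq2).1, (cross hp2 hq1).1, (cross hp2 hq2).1⟩,
      (cross hp1 hq1).2, (cross hp1 hq2).2, (cross hp2 hq1).2, (cross hp2 hq2).2⟩
  · rintro e he
    obtain ⟨p, hp, rfl⟩ := Finset.mem_image.mp he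
    exact Or.inl (hf p hp).2.1

lemma singleton_sub {V : Type} (G : SimpleGraph V) (a : V) :
    (G.induce {a}).Connected := by
  haveI : Nonempty ↥({a} : Set V) := ⟨⟨a, rfl⟩⟩
  haveI : Subsingleton ↥({a} : Set V) :=
    ⟨fun x y => Subtype.ext (x.2.trans y.2.symm)⟩
  exact connected_of_sub _

lemma isInducedMinor_induce {V : Type} (G : SimpleGraph V) (v : V) :
    IsInducedMinor G (G.induce {u | u ≠ v}) := by
  refine ⟨fun w => {w.1}, fun w => ⟨w.1, rfl⟩, fun w => singleton_sub G w.1, ?_, ?_⟩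
  · intro w₁ w₂ hne
    rw [Set.disjoint_singleton]
    exact fun hh => hne (Subtype.ext hh)
  · intro w₁ w₂ _
    constructor
    · intro hadj
      exact ⟨w₁.1, rfl, w₂.1, rfl, hadj⟩
    · rintro ⟨x, rfl, y, rfl, hadj⟩
      exact hadj

lemma isInducedMinor_contract {V : Type} (G : SimpleGraph V) {u v : V}
    (huv : G.Adj u v) : IsInducedMinor G (contractEdge G u v) := by
  classical
  have hvu : u ≠ v := huv.ne
  refine ⟨fun a => if a.1 = u then {u, v} else {a.1}, ?_, ?_, ?_, ?_⟩
  · intro a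
    dsimp only
    split_ifs
    · exact ⟨u, Or.inl rfl⟩
    · exact ⟨a.1, rfl⟩
  · intro a
    dsimp only
    by_cases ha : a.1 = u
    · rw [if_pos ha]
      exact induce_pair_connected G huv
    · rw [if_neg ha]
      exact singleton_sub G a.1
  · intro a b hab
    have hab' : a.1 ≠ b.1 := fun hh => hab (Subtype.ext hh)
    dsimp only
    split_ifs with ha hb hb
    · exact absurd (ha.trans hb.symm) hab'
    · rw [Set.disjoint_right]
      rintro x rfl
      rintro (hh | hh)
      · exact hb hh
      · exact b.2 hh
    · rw [Set.disjoint_left]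
      rintro x rfl
      rintro (hh | hh)
      · exact ha hh
      · exact a.2 hh
    · rw [Set.disjoint_singleton]
      exact hab'
  · intro a b hab
    have hab' : a.1 ≠ b.1 := fun hh => hab (Subtype.ext hh)
    have hmem : ∀ c : {w : V // w ≠ v}, c.1 ∈ (if c.1 = u then ({u, v} : Set V) else {c.1}) := by
      intro c
      split_ifs with hc
      · exact Or.inl hc
      · exact rfl
    rw [contractEdge, fromRel_adj]
    dsimp only
    constructor
    · rintro ⟨-, hrel⟩
      rcases hrel with (hGab | ⟨hau, hvb⟩ | ⟨hbu, hav⟩) | (hGba | ⟨hbu, hva⟩ | ⟨hau, hbv⟩)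
      · exact ⟨a.1, hmem a, b.1, hmem b, hGab⟩
      · refine ⟨v, ?_, b.1, hmem b, hvb⟩
        rw [if_pos hau]; exact Or.inr rfl
      · refine ⟨a.1, hmem a, v, ?_, hav⟩
        rw [if_pos hbu]; exact Or.inr rfl
      · exact ⟨a.1, hmem a, b.1, hmem b, hGba.symm⟩
      · refine ⟨a.1, hmem a, v, ?_, hva.symm⟩
        rw [if_pos hbu]; exact Or.inr rfl
      · refine ⟨v, ?_, b.1, hmem b, hbv.symm⟩
        rw [if_pos hau]; exact Or.inr rfl
    · rintro ⟨x, hx, y, hy, hGxy⟩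
      refine ⟨hab, Or.inl ?_⟩
      have hx' : x = a.1 ∨ (a.1 = u ∧ x = v) := by
        by_cases ha : a.1 = u
        · rw [if_pos ha] at hx
          rcases hx with rfl | rfl
          · exact Or.inl ha.symm
          · exact Or.inr ⟨ha, rfl⟩
        · rw [if_neg ha] at hx
          exact Or.inl hx
      have hy' : y = b.1 ∨ (b.1 = u ∧ y = v) := by
        by_cases hb : b.1 = u
        · rw [if_pos hb] at hy
          rcases hy with rfl | rfl
          · exact Or.inl hb.symm
          · exact Or.inr ⟨hb, rfl⟩
        · rw [if_neg hb] at hy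
          exact Or.inl hy
      rcases hx' with rfl | ⟨hau, rfl⟩ <;> rcases hy' with rfl | ⟨hbu, rfl⟩
      · exact Or.inl hGxy
      · exact Or.inr (Or.inr ⟨hbu, hGxy⟩)
      · exact Or.inr (Or.inl ⟨hau, hGxy⟩)
      · exact absurd hGxy (G.irrefl)

/-- induced matching treewidth is monotone under induced minors;
in particular under vertex deletion and edge contraction. -/
theorem stmt11 {V W : Type} [Fintype V] [Fintype W] [DecidableEq V]
    (G : SimpleGraph V) (H : SimpleGraph W) (h : IsInducedMinor G H) :
    treeMu H ≤ treeMu G ∧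
    (∀ v : V, treeMu (G.induce {u | u ≠ v}) ≤ treeMu G) ∧
    (∀ u v : V, G.Adj u v → treeMu (contractEdge G u v) ≤ treeMu G) := by
  refine ⟨treeMu_le_of_isInducedMinor G H h, ?_, ?_⟩
  · intro v
    exact treeMu_le_of_isInducedMinor G _ (isInducedMinor_induce G v)
  · intro u v huv
    exact treeMu_le_of_isInducedMinor G _ (isInducedMinor_contract G huv)

end Paper
end

section
/- For every finite simple graph G with at least one edge, it holds that tree-α(G) ≤ 2 · tree-μ(G) · Δ(G)², where Δ(G) is the maximum degree of G. -/
open SimpleGraph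

namespace Paper

section Aux

variable {V : Type} [Fintype V] (G : SimpleGraph V)

lemma connected_of_sub_s12 {W : Type} (H : SimpleGraph W) [Nonempty W] [Subsingleton W] :
    H.Connected := by
  constructor
  intro u v
  rw [Subsingleton.elim u v]

lemma bot_acyclic (W : Type) : (⊥ : SimpleGraph W).IsAcyclic := by
  intro v c hc
  cases c with
  | nil => exact hc.ne_nil rfl
  | cons h p => exact h

noncomputable def trivDecomp [Nonempty V] : TreeDecomp G where
  ι := Unit
  fin := inferInstance
  tree := ⊥
  isTree := ⟨connected_of_sub_s12 _, bot_acyclic _⟩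
  bag := fun _ => Set.univ
  mem_bag := fun _ => ⟨(), trivial⟩
  edge_bag := fun _ _ _ => ⟨(), trivial, trivial⟩
  coherent := fun v => by
    haveI : Nonempty {t : Unit | v ∈ (Set.univ : Set V)} := ⟨⟨(), trivial⟩⟩
    exact connected_of_sub_s12 _

lemma bddAbove_mu_set (D : TreeDecomp G) :
    BddAbove {n | ∃ (t : D.ι) (M : Finset (V × V)),
      IsInducedMatching G M ∧ Touches M (D.bag t) ∧ M.card = n} := by
  refine ⟨Fintype.card (V × V), ?_⟩
  rintro n ⟨t, M, _, _, rfl⟩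
  exact Finset.card_le_univ M

lemma card_le_mu (D : TreeDecomp G) {t : D.ι} {M : Finset (V × V)}
    (h1 : IsInducedMatching G M) (h2 : Touches M (D.bag t)) : M.card ≤ mu G D :=
  le_csSup (bddAbove_mu_set G D) ⟨t, M, h1, h2, rfl⟩

lemma one_le_mu (hE : ∃ u v : V, G.Adj u v) (D : TreeDecomp G) : 1 ≤ mu G D := by
  classical
  obtain ⟨u, v, huv⟩ := hE
  obtain ⟨t, hu, hv⟩ := D.edge_bag huv
  have h1 : IsInducedMatching G {(u, v)} := by
    constructor
    · intro p hp
      rw [Finset.mem_singleton] at hp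
      subst hp; exact huv
    · intro p hp q hq hpq
      rw [Finset.mem_singleton] at hp hq
      exact absurd (hp.trans hq.symm) hpq
  have h2 : Touches {(u, v)} (D.bag t) := by
    intro p hp
    rw [Finset.mem_singleton] at hp
    subst hp; exact Or.inl hu
  have := card_le_mu G D h1 h2
  simpa using this

omit [Fintype V] in
lemma treeMu_set_nonempty [Nonempty V] : {n | ∃ D : TreeDecomp G, mu G D = n}.Nonempty :=
  ⟨_, trivDecomp G, rfl⟩

lemma one_le_treeMu [Nonempty V] (hE : ∃ u v : V, G.Adj u v) : 1 ≤ treeMu G :=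
  le_csInf (treeMu_set_nonempty G) (by rintro n ⟨D, rfl⟩; exact one_le_mu G hE D)

lemma one_le_maxDegree [DecidableRel G.Adj] (hE : ∃ u v : V, G.Adj u v) :
    1 ≤ G.maxDegree := by
  obtain ⟨u, v, huv⟩ := hE
  have h1 : 0 < G.degree u := (G.degree_pos_iff_exists_adj u).mpr ⟨v, huv⟩
  exact h1.trans_le (G.degree_le_maxDegree u)

end Aux

section Greedy

variable {V : Type} [Fintype V] (G : SimpleGraph V) [DecidableRel G.Adj]

lemma greedy_matching : ∀ S : Finset V, IsIndepSet G S → (∀ v ∈ S, ∃ w, G.Adj v w) →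
    ∃ M : Finset (V × V), IsInducedMatching G M ∧ (∀ p ∈ M, p.1 ∈ S ∧ G.Adj p.1 p.2) ∧
      S.card ≤ 2 * G.maxDegree ^ 2 * M.card := by
  classical
  intro S
  induction S using Finset.strongInduction with
  | _ S ih =>
  intro hind hni
  rcases S.eq_empty_or_nonempty with rfl | ⟨s, hs⟩
  · refine ⟨∅, ⟨?_, ?_⟩, ?_, by simp⟩ <;> simp
  obtain ⟨s', hss'⟩ := hni s hs
  set Bad : Finset V :=
    (G.neighborFinset s ∪ G.neighborFinset s').biUnion (fun w => G.neighborFinset w) with hBad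
  have memBad : ∀ x w, (G.Adj s w ∨ G.Adj s' w) → G.Adj w x → x ∈ Bad := by
    intro x w h1 h2
    rw [hBad, Finset.mem_biUnion]
    refine ⟨w, ?_, by rwa [mem_neighborFinset]⟩
    rw [Finset.mem_union, mem_neighborFinset, mem_neighborFinset]
    exact h1
  have hBadcard : Bad.card ≤ 2 * G.maxDegree ^ 2 := by
    have h1 : Bad.card ≤ (G.neighborFinset s ∪ G.neighborFinset s').card * G.maxDegree :=
      Finset.card_biUnion_le_card_mul _ _ _ (fun w _ => G.degree_le_maxDegree w)
    have h2 : (G.neighborFinset s ∪ G.neighborFinset s').card ≤ 2 * G.maxDegree := by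
      calc (G.neighborFinset s ∪ G.neighborFinset s').card
          ≤ (G.neighborFinset s).card + (G.neighborFinset s').card := Finset.card_union_le _ _
        _ ≤ 2 * G.maxDegree := by
            have := G.degree_le_maxDegree s
            have := G.degree_le_maxDegree s'
            unfold SimpleGraph.degree at *
            omega
    calc Bad.card ≤ (G.neighborFinset s ∪ G.neighborFinset s').card * G.maxDegree := h1
      _ ≤ 2 * G.maxDegree * G.maxDegree := Nat.mul_le_mul_right _ h2
      _ = 2 * G.maxDegree ^ 2 := by ring
  have hsBad : s ∈ Bad := memBad s s' (Or.inl hss') hss'.symm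
  set S' := S \ Bad with hS'
  have hssub : S' ⊂ S := by
    rw [Finset.ssubset_iff_of_subset Finset.sdiff_subset]
    exact ⟨s, hs, by simp [hS', hsBad]⟩
  have hind' : IsIndepSet G S' := fun u hu v hv huv =>
    hind u (Finset.sdiff_subset hu) v (Finset.sdiff_subset hv) huv
  obtain ⟨M', hM'ind, hM'mem, hM'card⟩ := ih S' hssub hind'
    (fun v hv => hni v (Finset.sdiff_subset hv))
  -- non-conflict between the new edge (s, s') and any edge of M'
  have noconf : ∀ q ∈ M', (s ≠ q.1 ∧ s ≠ q.2 ∧ s' ≠ q.1 ∧ s' ≠ q.2) ∧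
      (¬G.Adj s q.1 ∧ ¬G.Adj s q.2 ∧ ¬G.Adj s' q.1 ∧ ¬G.Adj s' q.2) := by
    intro q hq
    obtain ⟨ht, htadj⟩ := hM'mem q hq
    set t := q.1
    set t' := q.2
    have htnb : t ∉ Bad := (Finset.mem_sdiff.mp ht).2
    refine ⟨⟨?_, ?_, ?_, ?_⟩, ?_, ?_, ?_, ?_⟩
    · rintro rfl; exact htnb hsBad
    · rintro heq
      exact htnb (memBad t s (Or.inr hss'.symm) (heq ▸ htadj).symm)
    · rintro rfl
      exact htnb (memBad t s (Or.inr hss'.symm) hss')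
    · rintro heq
      exact htnb (memBad t s' (Or.inl hss') (heq ▸ htadj).symm)
    · intro h; exact htnb (memBad t s (Or.inr hss'.symm) h)
    · intro h; exact htnb (memBad t t' (Or.inl h) htadj.symm)
    · intro h; exact htnb (memBad t s' (Or.inl hss') h)
    · intro h; exact htnb (memBad t t' (Or.inr h) htadj.symm)
  have hnotmem : (s, s') ∉ M' := by
    intro h
    exact ((noconf _ h).1.1 rfl)
  refine ⟨insert (s, s') M', ⟨?_, ?_⟩, ?_, ?_⟩
  · intro p hp
    rcases Finset.mem_insert.mp hp with rfl | hp
    · exact hss'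
    · exact (hM'mem p hp).2
  · intro p hp q hq hpq
    rcases Finset.mem_insert.mp hp with rfl | hp <;>
      rcases Finset.mem_insert.mp hq with rfl | hq
    · exact absurd rfl hpq
    · obtain ⟨⟨h1, h2, h3, h4⟩, h5, h6, h7, h8⟩ := noconf q hq
      exact ⟨⟨h1, h2, h3, h4⟩, h5, h6, h7, h8⟩
    · obtain ⟨⟨h1, h2, h3, h4⟩, h5, h6, h7, h8⟩ := noconf p hp
      exact ⟨⟨h1.symm, h3.symm, h2.symm, h4.symm⟩,
        fun h => h5 h.symm, fun h => h7 h.symm, fun h => h6 h.symm, fun h => h8 h.symm⟩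
    · exact hM'ind.2 p hp q hq hpq
  · intro p hp
    rcases Finset.mem_insert.mp hp with rfl | hp
    · exact ⟨hs, hss'⟩
    · exact ⟨Finset.sdiff_subset (hM'mem p hp).1, (hM'mem p hp).2⟩
  · have hcard : (insert (s, s') M').card = M'.card + 1 := Finset.card_insert_of_notMem hnotmem
    have hSsplit : S.card ≤ S'.card + Bad.card := by
      have hsub2 : S ⊆ S' ∪ Bad := by
        intro x hx
        rw [Finset.mem_union, hS', Finset.mem_sdiff]
        by_cases hxB : x ∈ Bad
        · exact Or.inr hxB
        · exact Or.inl ⟨hx, hxB⟩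
      calc S.card ≤ (S' ∪ Bad).card := Finset.card_le_card hsub2
        _ ≤ S'.card + Bad.card := Finset.card_union_le _ _
    calc S.card ≤ S'.card + Bad.card := hSsplit
      _ ≤ 2 * G.maxDegree ^ 2 * M'.card + 2 * G.maxDegree ^ 2 := by
          exact Nat.add_le_add hM'card hBadcard
      _ = 2 * G.maxDegree ^ 2 * (M'.card + 1) := by ring
      _ = 2 * G.maxDegree ^ 2 * (insert (s, s') M').card := by rw [hcard]

end Greedy

section Star

variable {ι κ : Type} (T : SimpleGraph ι) (t0 : ι)

/-- Attach all of `κ` as pendant leaves at `t0`. -/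
def starTree : SimpleGraph (ι ⊕ κ) where
  Adj x y := match x, y with
    | .inl a, .inl b => T.Adj a b
    | .inl a, .inr _ => a = t0
    | .inr _, .inl a => a = t0
    | .inr _, .inr _ => False
  symm := ⟨by rintro (a | a) (b | b) h <;> first | exact h.symm | exact h⟩
  loopless := ⟨by rintro (a | a) h; exacts [T.irrefl h, h]⟩

@[simp] lemma starTree_adj_inl_inl {a b : ι} : (starTree T t0 (κ := κ)).Adj (.inl a) (.inl b) ↔ T.Adj a b := Iff.rfl
@[simp] lemma starTree_adj_inl_inr {a : ι} {v : κ} : (starTree T t0).Adj (.inl a) (.inr v) ↔ a = t0 := Iff.rfl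
@[simp] lemma starTree_adj_inr_inl {a : ι} {v : κ} : (starTree T t0).Adj (.inr v) (.inl a) ↔ a = t0 := Iff.rfl
@[simp] lemma starTree_adj_inr_inr {v w : κ} : ¬ (starTree T t0).Adj (.inr v) (.inr w) := fun h => h

/-- The obvious embedding hom from `T`. -/
def starTreeHom : T →g starTree T t0 (κ := κ) where
  toFun := Sum.inl
  map_rel' := fun h => h

lemma starTree_connected (hT : T.Connected) : (starTree T t0 (κ := κ)).Connected := by
  have key : ∀ x : ι ⊕ κ, (starTree T t0).Reachable x (.inl t0) := by
    rintro (a | v)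
    · exact (hT a t0).map (starTreeHom T t0)
    · exact SimpleGraph.Adj.reachable (by simp)
  haveI : Nonempty (ι ⊕ κ) := ⟨.inl t0⟩
  exact ⟨fun x y => (key x).trans (key y).symm⟩

lemma starTree_del_proj {a b : ι} {x y : ι ⊕ κ}
    (h : ((starTree T t0).deleteEdges {s(.inl a, .inl b)}).Reachable x y) :
    (T.deleteEdges {s(a, b)}).Reachable (Sum.elim id (fun _ => t0) x)
      (Sum.elim id (fun _ => t0) y) := by
  obtain ⟨w⟩ := h
  induction w with
  | nil => exact Reachable.refl _
  | @cons x z y h' p ih =>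
    refine Reachable.trans ?_ ih
    obtain ⟨h1, h2⟩ := SimpleGraph.deleteEdges_adj.mp h'
    match x, z with
    | .inl c, .inl d =>
      refine SimpleGraph.Adj.reachable ?_
      rw [SimpleGraph.deleteEdges_adj]
      refine ⟨h1, ?_⟩
      simp only [Set.mem_singleton_iff, Sym2.eq_iff] at h2 ⊢
      intro hcd
      apply h2
      rcases hcd with ⟨rfl, rfl⟩ | ⟨rfl, rfl⟩
      · exact Or.inl ⟨rfl, rfl⟩
      · exact Or.inr ⟨rfl, rfl⟩
    | .inl c, .inr v =>
      have : c = t0 := h1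
      subst this
      exact Reachable.refl _
    | .inr v, .inl c =>
      have : c = t0 := h1
      subst this
      exact Reachable.refl _
    | .inr v, .inr w => exact absurd h1 (starTree_adj_inr_inr T t0)

lemma starTree_no_leaf_reach (v : κ) :
    ¬ ((starTree T t0).deleteEdges {s(Sum.inl t0, Sum.inr v)}).Reachable
        (Sum.inr v) (Sum.inl t0) := by
  rintro ⟨p⟩
  cases p with
  | cons h' q =>
    obtain ⟨h1, h2⟩ := SimpleGraph.deleteEdges_adj.mp h'
    rename_i z
    match z, h1 with
    | .inl c, h1 =>
      have : c = t0 := h1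
      subst this
      exact h2 (by rw [Sym2.eq_swap]; rfl)

lemma starTree_isTree (hT : T.IsTree) : (starTree T t0 (κ := κ)).IsTree := by
  refine ⟨starTree_connected T t0 hT.isConnected, ?_⟩
  rw [isAcyclic_iff_forall_adj_isBridge]
  have hacy := isAcyclic_iff_forall_adj_isBridge.mp hT.IsAcyclic
  rintro (a | v) (b | w) h
  · -- inl a, inl b
    rw [isBridge_iff]
    refine fun hr => ?_
    have := starTree_del_proj T t0 hr
    simp only [Sum.elim_inl, id] at this
    exact (isBridge_iff.mp (hacy h)) this
  · -- inl a, inr w : a = t0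
    rw [show a = t0 from h, isBridge_iff]
    exact fun hr => starTree_no_leaf_reach T t0 w hr.symm
  · -- inr v, inl b : b = t0
    rw [show b = t0 from h, isBridge_iff]
    refine fun hr => ?_
    rw [Sym2.eq_swap] at hr
    exact starTree_no_leaf_reach T t0 v hr
  · exact absurd h (starTree_adj_inr_inr T t0)

end Star

section Ext

variable {V : Type} [Fintype V] (G : SimpleGraph V) [DecidableRel G.Adj]

/-- Extend a tree decomposition: restrict bags to non-isolated vertices and attach each
isolated vertex as a pendant leaf bag. -/
noncomputable def extDecomp (D0 : TreeDecomp G) (t0 : D0.ι) : TreeDecomp G where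
  ι := D0.ι ⊕ {v : V // ∀ w, ¬ G.Adj v w}
  fin := by haveI := D0.fin; exact inferInstance
  tree := starTree D0.tree t0
  isTree := starTree_isTree _ _ D0.isTree
  bag := Sum.elim (fun t => D0.bag t ∩ {v | ∃ w, G.Adj v w}) (fun z => ({z.1} : Set V))
  mem_bag := by
    intro v
    by_cases h : ∃ w, G.Adj v w
    · obtain ⟨t, ht⟩ := D0.mem_bag v
      exact ⟨.inl t, ht, h⟩
    · push_neg at h
      exact ⟨.inr ⟨v, h⟩, rfl⟩
  edge_bag := by
    intro u w huw
    obtain ⟨t, h1, h2⟩ := D0.edge_bag huw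
    exact ⟨.inl t, ⟨h1, w, huw⟩, ⟨h2, u, huw.symm⟩⟩
  coherent := by
    intro v
    by_cases hv : ∃ w, G.Adj v w
    · set A : Set D0.ι := {t | v ∈ D0.bag t} with hA
      set B : Set (D0.ι ⊕ {v : V // ∀ w, ¬ G.Adj v w}) :=
        {n | v ∈ Sum.elim (fun t => D0.bag t ∩ {v | ∃ w, G.Adj v w})
          (fun z => ({z.1} : Set V)) n} with hB
      have hToB : ∀ t : A, Sum.inl t.1 ∈ B := fun t => ⟨t.2, hv⟩
      have hbij : Function.Bijective (fun t : A => (⟨Sum.inl t.1, hToB t⟩ : B)) := by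
        constructor
        · intro a b hab
          simp only [Subtype.mk_eq_mk, Sum.inl.injEq] at hab
          exact Subtype.ext hab
        · rintro ⟨(t | z), hn⟩
          · exact ⟨⟨t, hn.1⟩, rfl⟩
          · exact absurd hv (by
              obtain ⟨w, hw⟩ := hv
              have hvz : v = z.1 := hn
              exact absurd hw (hvz ▸ z.2 w))
      have e : (D0.tree.induce A) ≃g ((starTree D0.tree t0).induce B) :=
        { toEquiv := Equiv.ofBijective _ hbij
          map_rel_iff' := Iff.rfl }
      exact e.connected_iff.mp (D0.coherent v)
    · push_neg at hv
      haveI hne : Nonempty {n : D0.ι ⊕ {u : V // ∀ w, ¬ G.Adj u w} | v ∈ Sum.elim (fun t => D0.bag t ∩ {v | ∃ w, G.Adj v w})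
          (fun z => ({z.1} : Set V)) n} := by
        refine ⟨⟨Sum.inr ⟨v, hv⟩, ?_⟩⟩
        show v ∈ ({v} : Set V)
        rfl
      haveI : Subsingleton {n : D0.ι ⊕ {u : V // ∀ w, ¬ G.Adj u w} | v ∈ Sum.elim (fun t => D0.bag t ∩ {v | ∃ w, G.Adj v w})
          (fun z => ({z.1} : Set V)) n} := by
        constructor
        rintro ⟨(t | z), h1⟩ ⟨(t' | z'), h2⟩
        · obtain ⟨w, hw⟩ := h1.2; exact absurd hw (hv w)
        · obtain ⟨w, hw⟩ := h1.2; exact absurd hw (hv w)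
        · obtain ⟨w, hw⟩ := h2.2; exact absurd hw (hv w)
        · have e1 : v = z.1 := h1
          have e2 : v = z'.1 := h2
          exact Subtype.ext (congrArg Sum.inr (Subtype.ext (e1.symm.trans e2)))
      exact connected_of_sub_s12 _

end Ext

/-- for a graph with at least one edge,
tree-α(G) ≤ 2 · tree-μ(G) · Δ(G)². -/
theorem stmt12 {V : Type} [Fintype V] (G : SimpleGraph V) [DecidableRel G.Adj]
    (hE : ∃ u v : V, G.Adj u v) :
    treeAlpha G ≤ 2 * treeMu G * G.maxDegree ^ 2 := by
  classical
  obtain ⟨u0, v0, huv0⟩ := hE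
  haveI : Nonempty V := ⟨u0⟩
  obtain ⟨D0, hD0⟩ := Nat.sInf_mem (treeMu_set_nonempty G)
  have hD0' : mu G D0 = treeMu G := hD0
  obtain ⟨t0, _⟩ := D0.mem_bag u0
  have halpha : alphaTD G (extDecomp G D0 t0) ≤ 2 * treeMu G * G.maxDegree ^ 2 := by
    apply csSup_le'
    rintro n ⟨t, S, hS, hsub, rfl⟩
    obtain t | z := t
    · have hsub' : ∀ v ∈ S, v ∈ D0.bag t ∧ ∃ w, G.Adj v w := fun v hv => hsub hv
      obtain ⟨M, hMind, hMmem, hMcard⟩ := greedy_matching G S hS (fun v hv => (hsub' v hv).2)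
      have htouch : Touches M (D0.bag t) := fun p hp => Or.inl (hsub' p.1 (hMmem p hp).1).1
      have h1 : M.card ≤ treeMu G := hD0' ▸ card_le_mu G D0 hMind htouch
      calc S.card ≤ 2 * G.maxDegree ^ 2 * M.card := hMcard
        _ ≤ 2 * G.maxDegree ^ 2 * treeMu G := Nat.mul_le_mul_left _ h1
        _ = 2 * treeMu G * G.maxDegree ^ 2 := by ring
    · have hc1 : S.card ≤ 1 := Finset.card_le_one.mpr (fun a ha b hb => by
        have h1 : a = z.1 := hsub ha
        have h2 : b = z.1 := hsub hb
        rw [h1, h2])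
      have h2 : 1 ≤ 2 * treeMu G * G.maxDegree ^ 2 := by
        have ha := one_le_treeMu G ⟨u0, v0, huv0⟩
        have hb := one_le_maxDegree G ⟨u0, v0, huv0⟩
        nlinarith
      omega
  exact le_trans (Nat.sInf_le ⟨extDecomp G D0 t0, rfl⟩) halpha

end Paper
end
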